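/- arXiv:2007.04227 — 4 statements merged into one kernel-verified Lean document; each statement's English description precedes it below -/
import Mathlib

section
/- For all natural numbers k, k', m, ∫₀^∞ x^m L_k^{(m)}(x) L_{k'}^{(m)}(x) e^{-x} dx = ((k+m)!/k!) δ_{k,k'}, where L_k^{(m)} is the generalized (associated) Laguerre polynomial. -/
open MeasureTheory Set Finset

/-- Generalized (associated) Laguerre polynomial
`L^{(m)}_n(x) = ∑_{j=0}^n C(n+m, n-j) (-x)^j / j!`. -/
noncomputable def genLaguerre (n m : ℕ) (x : ℝ) : ℝ :=
  ∑ j ∈ Finset.range (n + 1), ((n + m).choose (n - j) : ℝ) * (-x) ^ j / j.factorial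

/-- Generalized binomial coefficient `C(d, k)` for integer `d`. -/
def genChoose (d : ℤ) (k : ℕ) : ℤ :=
  if 0 ≤ d then (d.toNat.choose k : ℤ) else (-1) ^ k * ((k + (-d - 1).toNat).choose k : ℤ)

lemma genChoose_zero (d : ℤ) : genChoose d 0 = 1 := by
  unfold genChoose; split <;> simp

lemma genChoose_nat (a : ℕ) (k : ℕ) : genChoose (a : ℤ) k = (a.choose k : ℤ) := by
  simp [genChoose]

lemma genChoose_pascal (d : ℤ) (k : ℕ) :
    genChoose d (k + 1) = genChoose (d - 1) k + genChoose (d - 1) (k + 1) := by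
  rcases lt_trichotomy d 0 with h | h | h
  · have h1 : ¬ (0 ≤ d) := by omega
    have h2 : ¬ (0 ≤ d - 1) := by omega
    have h3 : (-(d - 1) - 1).toNat = (-d - 1).toNat + 1 := by omega
    simp only [genChoose, if_neg h1, if_neg h2, h3]
    set s := (-d - 1).toNat with hs
    have e1 : k + 1 + s = (k + s) + 1 := by ring
    have e2 : k + (s + 1) = (k + s) + 1 := by ring
    have e3 : k + 1 + (s + 1) = (k + s + 1) + 1 := by ring
    rw [e1, e2, e3, Nat.choose_succ_succ (k + s + 1) k]
    have e4 : (k + s + 1).choose (k + 1) = (k + s).choose k + (k + s).choose (k+1) :=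
      Nat.choose_succ_succ (k + s) k
    push_cast [e4]
    ring
  · subst h
    have h2 : ¬ ((0:ℤ) ≤ 0 - 1) := by norm_num
    have h3 : (-(0 - 1 : ℤ) - 1).toNat = 0 := by norm_num
    simp only [genChoose, if_pos le_rfl, if_neg h2, h3, Int.toNat_zero]
    simp [pow_succ, Nat.choose_zero_succ]
  · have h1 : (0:ℤ) ≤ d := le_of_lt h
    have h2 : (0:ℤ) ≤ d - 1 := by omega
    simp only [genChoose, if_pos h1, if_pos h2]
    have : d.toNat = (d - 1).toNat + 1 := by omega
    rw [this, Nat.choose_succ_succ]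
    push_cast; ring

lemma keyH (a : ℕ) : ∀ k : ℕ,
    ∑ i ∈ range (k + 1), (-1 : ℤ) ^ i * (a.choose (k - i) : ℤ) = genChoose ((a : ℤ) - 1) k := by
  intro k
  induction k with
  | zero => simpa using (genChoose_zero ((a:ℤ) - 1)).symm
  | succ k ih =>
    rw [Finset.sum_range_succ' (fun i => (-1 : ℤ) ^ i * (a.choose (k + 1 - i) : ℤ)) (k+1)]
    have e : ∀ i ∈ range (k+1), (-1:ℤ)^(i+1) * (a.choose (k + 1 - (i+1)) : ℤ)
        = -((-1:ℤ)^i * (a.choose (k - i) : ℤ)) := by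
      intro i hi
      have : k + 1 - (i + 1) = k - i := by omega
      rw [this]; ring
    rw [Finset.sum_congr rfl e, Finset.sum_neg_distrib, ih]
    have pas := genChoose_pascal (a : ℤ) k
    rw [genChoose_nat a (k+1)] at pas
    simp only [Nat.sub_zero, pow_zero, one_mul]
    omega

lemma keyG (b : ℕ) : ∀ k a : ℕ,
    ∑ i ∈ range (k + 1), (-1 : ℤ) ^ i * (a.choose (k - i) : ℤ) * ((b + i).choose i : ℤ)
      = genChoose ((a : ℤ) - b - 1) k := by
  induction b with
  | zero =>
    intro k a
    have : ∀ i ∈ range (k+1), (-1 : ℤ) ^ i * (a.choose (k - i) : ℤ) * ((0 + i).choose i : ℤ)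
        = (-1 : ℤ) ^ i * (a.choose (k - i) : ℤ) := by
      intro i _; simp [Nat.choose_self]
    rw [Finset.sum_congr rfl this, keyH a k]
    norm_num
  | succ b ihb =>
    intro k
    induction k with
    | zero =>
      intro a
      simpa using (genChoose_zero ((a:ℤ) - (b+1) - 1)).symm
    | succ k ihk =>
      intro a
      -- G(k+1, a, b+1) = G(k+1, a, b) - G(k, a, b+1)
      have lhs_eq : ∑ i ∈ range (k + 2), (-1 : ℤ) ^ i * (a.choose (k + 1 - i) : ℤ) *
            (((b+1) + i).choose i : ℤ)
          = (a.choose (k+1) : ℤ)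
            - ∑ i ∈ range (k + 1), (-1 : ℤ) ^ i * (a.choose (k - i) : ℤ) *
                (((b + 1 + i).choose i : ℤ) + ((b + 1 + i).choose (i+1) : ℤ)) := by
        rw [Finset.sum_range_succ' _ (k+1)]
        have e : ∀ i ∈ range (k+1), (-1:ℤ)^(i+1) * (a.choose (k + 1 - (i+1)) : ℤ) *
              (((b+1) + (i+1)).choose (i+1) : ℤ)
            = -((-1:ℤ)^i * (a.choose (k - i) : ℤ) *
                (((b + 1 + i).choose i : ℤ) + ((b + 1 + i).choose (i+1) : ℤ))) := by
          intro i hi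
          have h1 : k + 1 - (i + 1) = k - i := by omega
          have h2 : b + 1 + (i + 1) = (b + 1 + i) + 1 := by ring
          rw [h1, h2, Nat.choose_succ_succ (b+1+i) i]
          push_cast; ring
        rw [Finset.sum_congr rfl e, Finset.sum_neg_distrib]
        simp only [Nat.sub_zero, pow_zero, one_mul, Nat.choose_zero_right, Nat.cast_one, mul_one]
        ring
      have rhs1_eq : ∑ i ∈ range (k + 2), (-1 : ℤ) ^ i * (a.choose (k + 1 - i) : ℤ) *
            ((b + i).choose i : ℤ)
          = (a.choose (k+1) : ℤ)
            - ∑ i ∈ range (k + 1), (-1 : ℤ) ^ i * (a.choose (k - i) : ℤ) *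
                ((b + 1 + i).choose (i+1) : ℤ) := by
        rw [Finset.sum_range_succ' _ (k+1)]
        have e : ∀ i ∈ range (k+1), (-1:ℤ)^(i+1) * (a.choose (k + 1 - (i+1)) : ℤ) *
              ((b + (i+1)).choose (i+1) : ℤ)
            = -((-1:ℤ)^i * (a.choose (k - i) : ℤ) * ((b + 1 + i).choose (i+1) : ℤ)) := by
          intro i hi
          have h1 : k + 1 - (i + 1) = k - i := by omega
          have h2 : b + (i + 1) = b + 1 + i := by ring
          rw [h1, h2]; ring
        rw [Finset.sum_congr rfl e, Finset.sum_neg_distrib]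
        simp only [Nat.sub_zero, pow_zero, one_mul, Nat.choose_zero_right, Nat.cast_one, mul_one]
        ring
      have sub : ∑ i ∈ range (k + 1), (-1 : ℤ) ^ i * (a.choose (k - i) : ℤ) *
            (((b + 1 + i).choose i : ℤ) + ((b + 1 + i).choose (i+1) : ℤ))
          = (∑ i ∈ range (k + 1), (-1 : ℤ) ^ i * (a.choose (k - i) : ℤ) *
              ((b + 1 + i).choose i : ℤ))
            + ∑ i ∈ range (k + 1), (-1 : ℤ) ^ i * (a.choose (k - i) : ℤ) *
              ((b + 1 + i).choose (i+1) : ℤ) := by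
        rw [← Finset.sum_add_distrib]
        exact Finset.sum_congr rfl (fun i _ => by ring)
      rw [lhs_eq, sub, ihk a]
      have hb := ihb (k+1) a
      rw [rhs1_eq] at hb
      have pas := genChoose_pascal ((a:ℤ) - b - 1) k
      have e1 : (a:ℤ) - b - 1 - 1 = (a:ℤ) - (b+1) - 1 := by push_cast; ring
      rw [e1] at pas
      have e2 : (a:ℤ) - (b:ℤ) - 1 = (a:ℤ) - b - 1 := by norm_num
      push_cast at hb ⊢
      linarith [hb, pas]

lemma genChoose_eval (k n : ℕ) : genChoose ((k : ℤ) - n - 1) k = (-1)^k * (n.choose k : ℤ) := by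
  rcases le_or_gt k n with h | h
  · have h1 : ¬ ((0:ℤ) ≤ (k:ℤ) - n - 1) := by omega
    have h2 : (-((k:ℤ) - n - 1) - 1).toNat = n - k := by omega
    rw [genChoose, if_neg h1, h2]
    have : k + (n - k) = n := by omega
    rw [this]
  · have h1 : (0:ℤ) ≤ (k:ℤ) - n - 1 := by omega
    have h2 : ((k:ℤ) - n - 1).toNat = k - n - 1 := by omega
    rw [genChoose, if_pos h1, h2, Nat.choose_eq_zero_of_lt (by omega),
      Nat.choose_eq_zero_of_lt h]
    simp

lemma L1 (k n m : ℕ) :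
    ∑ i ∈ range (k + 1), (-1 : ℤ) ^ i * ((k + m).choose (k - i) : ℤ) * ((m + n + i).choose i : ℤ)
      = (-1)^k * (n.choose k : ℤ) := by
  have := keyG (m + n) k (k + m)
  rw [this]
  have e : ((k + m : ℕ) : ℤ) - (m + n : ℕ) - 1 = (k:ℤ) - n - 1 := by push_cast; ring
  rw [e, genChoose_eval]

-- real version with factorials
lemma L1R (k n m : ℕ) :
    ∑ i ∈ range (k + 1), (-1 : ℝ) ^ i * ((k + m).choose (k - i) : ℝ) *
        ((m + n + i).factorial : ℝ) / (i.factorial : ℝ)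
      = (-1)^k * (n.choose k : ℝ) * ((m + n).factorial : ℝ) := by
  have e : ∀ i ∈ range (k + 1), (-1 : ℝ) ^ i * ((k + m).choose (k - i) : ℝ) *
        ((m + n + i).factorial : ℝ) / (i.factorial : ℝ)
      = ((-1 : ℝ) ^ i * ((k + m).choose (k - i) : ℝ) * ((m + n + i).choose i : ℝ))
          * ((m + n).factorial : ℝ) := by
    intro i _
    have hfac : ((m + n + i).choose i : ℝ) * (i.factorial : ℝ) * ((m + n).factorial : ℝ)
        = ((m + n + i).factorial : ℝ) := by
      have := Nat.choose_mul_factorial_mul_factorial (n := m + n + i) (k := i) (by omega)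
      have hsub : m + n + i - i = m + n := by omega
      rw [hsub] at this
      exact_mod_cast congrArg (Nat.cast : ℕ → ℝ) this
    rw [← hfac]
    have hi : (i.factorial : ℝ) ≠ 0 := Nat.cast_ne_zero.mpr i.factorial_ne_zero
    field_simp
  rw [Finset.sum_congr rfl e, ← Finset.sum_mul]
  have := L1 k n m
  have : ∑ i ∈ range (k + 1), (-1 : ℝ) ^ i * ((k + m).choose (k - i) : ℝ) *
      ((m + n + i).choose i : ℝ) = (-1)^k * (n.choose k : ℝ) := by
    exact_mod_cast congrArg (Int.cast : ℤ → ℝ) this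
  rw [this]

lemma integ_pow_exp (p : ℕ) : IntegrableOn (fun x : ℝ => x ^ p * Real.exp (-x)) (Ioi 0) := by
  have h := Real.GammaIntegral_convergent (s := p + 1) (by positivity)
  apply h.congr_fun ?_ measurableSet_Ioi
  intro x hx
  simp only [add_sub_cancel_right, Real.rpow_natCast]
  ring

lemma integral_pow_exp (p : ℕ) :
    ∫ x in Ioi (0:ℝ), x ^ p * Real.exp (-x) = p.factorial := by
  rw [← Real.Gamma_nat_eq_factorial, Real.Gamma_eq_integral (by positivity)]
  apply setIntegral_congr_fun measurableSet_Ioi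
  intro x hx
  simp only [add_sub_cancel_right, Real.rpow_natCast]
  ring

lemma main_le (k k' m : ℕ) (hkk : k ≤ k') :
    ∫ x in Set.Ioi (0 : ℝ),
        x ^ m * genLaguerre k m x * genLaguerre k' m x * Real.exp (-x)
      = ((k + m).factorial : ℝ) / (k.factorial : ℝ) * (if k = k' then 1 else 0) := by
  have expand : ∀ x : ℝ, x ^ m * genLaguerre k m x * genLaguerre k' m x * Real.exp (-x)
      = ∑ j ∈ range (k + 1), ∑ i ∈ range (k' + 1),
          (((k + m).choose (k - j) : ℝ) * (-1)^j / j.factorial *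
            (((k' + m).choose (k' - i) : ℝ) * (-1)^i / i.factorial)) *
          (x ^ (m + j + i) * Real.exp (-x)) := by
    intro x
    have h0 : x ^ m * genLaguerre k m x * genLaguerre k' m x * Real.exp (-x)
        = (∑ j ∈ range (k+1), ∑ i ∈ range (k'+1),
            (((k + m).choose (k - j) : ℝ) * (-x) ^ j / j.factorial) *
              (((k' + m).choose (k' - i) : ℝ) * (-x) ^ i / i.factorial))
            * (x ^ m * Real.exp (-x)) := by
      rw [← Finset.sum_mul_sum]
      simp only [genLaguerre]
      ring
    rw [h0, Finset.sum_mul]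
    refine Finset.sum_congr rfl fun j _ => ?_
    rw [Finset.sum_mul]
    refine Finset.sum_congr rfl fun i _ => ?_
    rw [neg_pow x j, neg_pow x i, pow_add, pow_add]
    ring
  simp only [expand]
  rw [integral_finset_sum _ (fun j _ => integrable_finset_sum _ (fun i _ =>
    ((integ_pow_exp (m + j + i)).const_mul _)))]
  have step2 : ∀ j ∈ range (k+1),
      (∫ x in Ioi (0:ℝ), ∑ i ∈ range (k' + 1),
          (((k + m).choose (k - j) : ℝ) * (-1)^j / j.factorial *
            (((k' + m).choose (k' - i) : ℝ) * (-1)^i / i.factorial)) *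
          (x ^ (m + j + i) * Real.exp (-x)))
      = ((k + m).choose (k - j) : ℝ) * (-1)^j / j.factorial *
          ((-1)^(k') * (j.choose k' : ℝ) * ((m + j).factorial : ℝ)) := by
    intro j _
    rw [integral_finset_sum _ (fun i _ => ((integ_pow_exp (m + j + i)).const_mul _))]
    have : ∀ i ∈ range (k' + 1),
        (∫ x in Ioi (0:ℝ),
          (((k + m).choose (k - j) : ℝ) * (-1)^j / j.factorial *
            (((k' + m).choose (k' - i) : ℝ) * (-1)^i / i.factorial)) *
          (x ^ (m + j + i) * Real.exp (-x)))
        = ((k + m).choose (k - j) : ℝ) * (-1)^j / j.factorial *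
            ((-1 : ℝ) ^ i * ((k' + m).choose (k' - i) : ℝ) *
              ((m + j + i).factorial : ℝ) / (i.factorial : ℝ)) := by
      intro i _
      rw [MeasureTheory.integral_const_mul, integral_pow_exp]
      ring
    rw [Finset.sum_congr rfl this, ← Finset.mul_sum, L1R k' j m]
  rw [Finset.sum_congr rfl step2]
  rcases eq_or_lt_of_le hkk with h | h
  · subst h
    rw [Finset.sum_eq_single_of_mem k (self_mem_range_succ k)]
    · simp only [Nat.sub_self, Nat.choose_zero_right, Nat.choose_self, if_pos rfl,
        Nat.cast_one, one_mul, mul_one]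
      have hfac : (m + k).factorial = (k + m).factorial := by rw [add_comm]
      field_simp [hfac]
      rw [← pow_mul, mul_comm k 2, pow_mul, hfac]
      norm_num
    · intro j hjm hjne
      have hjk : j < k + 1 := Finset.mem_range.mp hjm
      rw [Nat.choose_eq_zero_of_lt (show j < k by omega)]
      simp
  · have : ∀ j ∈ range (k+1),
        ((k + m).choose (k - j) : ℝ) * (-1)^j / j.factorial *
          ((-1)^(k') * (j.choose k' : ℝ) * ((m + j).factorial : ℝ)) = 0 := by
      intro j hj
      have hjk : j < k + 1 := Finset.mem_range.mp hj
      rw [Nat.choose_eq_zero_of_lt (show j < k' by omega)]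
      simp
    rw [Finset.sum_congr rfl this, Finset.sum_const_zero, if_neg (by omega)]
    ring

/-- Orthogonality of the generalized Laguerre polynomials:
`∫₀^∞ x^m L_k^{(m)}(x) L_{k'}^{(m)}(x) e^{-x} dx = ((k+m)!/k!) δ_{k,k'}`. -/
theorem genLaguerre_orthogonality (k k' m : ℕ) :
    ∫ x in Set.Ioi (0 : ℝ),
        x ^ m * genLaguerre k m x * genLaguerre k' m x * Real.exp (-x)
      = ((k + m).factorial : ℝ) / (k.factorial : ℝ) * (if k = k' then 1 else 0) := by
  rcases le_or_gt k k' with h | h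
  · exact main_le k k' m h
  · have := main_le k' k m (le_of_lt h)
    have comm : ∀ x : ℝ, x ^ m * genLaguerre k' m x * genLaguerre k m x * Real.exp (-x)
        = x ^ m * genLaguerre k m x * genLaguerre k' m x * Real.exp (-x) := fun x => by ring
    simp only [comm] at this
    rw [this, if_neg (by omega), if_neg (by omega)]
    ring
end

section
/- For every complex γ with Re(γ) > -1/2, every m ∈ ℕ, and every x ≥ 0, the series ∑_{k=0}^∞ γ^k/(1+γ)^{k+m+1} L_k^{(m)}(x) converges to e^{-γ x}. -/
/-- auxiliary doubly-indexed family, in `(j, i)` order -/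
noncomputable def lagAuxF (m : ℕ) (x : ℝ) (t : ℂ) (p : ℕ × ℕ) : ℂ :=
  ((-(x:ℂ) * t) ^ p.1 / (p.1.factorial : ℂ)) *
    (((p.2 + (p.1 + m)).choose (p.1 + m) : ℂ) * t ^ p.2)

/-- auxiliary doubly-indexed family, in `(k, j)` order with `j ≤ k` -/
noncomputable def lagAuxG (m : ℕ) (x : ℝ) (t : ℂ) (q : ℕ × ℕ) : ℂ :=
  if q.2 ≤ q.1 then
    t ^ q.1 * ((q.1 + m).choose (q.1 - q.2) : ℂ) * (-(x:ℂ)) ^ q.2 / (q.2.factorial : ℂ)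
  else 0

lemma lagAuxF_norm (m : ℕ) (x : ℝ) (hx : 0 ≤ x) (t : ℂ) (p : ℕ × ℕ) :
    ‖lagAuxF m x t p‖ = ((x * ‖t‖) ^ p.1 / (p.1.factorial : ℝ)) *
      (((p.2 + (p.1 + m)).choose (p.1 + m) : ℝ) * ‖t‖ ^ p.2) := by
  obtain ⟨j, i⟩ := p
  simp only [lagAuxF, norm_mul, norm_div, norm_pow, norm_neg,
    Complex.norm_real, Complex.norm_natCast, Real.norm_eq_abs, abs_of_nonneg hx]

lemma lagAuxR_summable (m : ℕ) (x r : ℝ) (hx : 0 ≤ x) (hr0 : 0 ≤ r) (hr : r < 1) :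
    Summable (fun p : ℕ × ℕ => ((x * r) ^ p.1 / (p.1.factorial : ℝ)) *
      (((p.2 + (p.1 + m)).choose (p.1 + m) : ℝ) * r ^ p.2)) := by
  have h1r : (0:ℝ) < 1 - r := by linarith
  have hrn : ‖r‖ < 1 := by rwa [Real.norm_eq_abs, abs_of_nonneg hr0]
  rw [summable_prod_of_nonneg (fun p => by positivity)]
  refine ⟨?_, ?_⟩
  · intro j
    dsimp only
    exact (summable_choose_mul_geometric_of_norm_lt_one (j + m) hrn).mul_left _
  · have htsum : ∀ j : ℕ, (∑' i : ℕ, ((x * r) ^ j / (j.factorial : ℝ)) *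
      (((i + (j + m)).choose (j + m) : ℝ) * r ^ i)) =
        ((1 - r) ^ (m + 1))⁻¹ * ((x * r / (1 - r)) ^ j / (j.factorial : ℝ)) := by
      intro j
      rw [tsum_mul_left, tsum_choose_mul_geometric_of_norm_lt_one (j + m) hrn, div_pow,
        one_div, show j + m + 1 = j + (m + 1) by omega, pow_add, mul_inv]
      ring
    apply Summable.congr ((Real.summable_pow_div_factorial (x * r / (1 - r))).mul_left
      (((1 - r) ^ (m + 1))⁻¹))
    intro j
    dsimp only
    exact (htsum j).symm

lemma lagAuxF_summable (m : ℕ) (x : ℝ) (hx : 0 ≤ x) (t : ℂ) (ht : ‖t‖ < 1) :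
    Summable (lagAuxF m x t) := by
  apply Summable.of_norm
  exact (lagAuxR_summable m x ‖t‖ hx (norm_nonneg _) ht).congr
    (fun p => (lagAuxF_norm m x hx t p).symm)

lemma lagAux_comp (m : ℕ) (x : ℝ) (t : ℂ) :
    lagAuxG m x t ∘ (fun p : ℕ × ℕ => (p.1 + p.2, p.1)) = lagAuxF m x t := by
  funext p
  obtain ⟨j, i⟩ := p
  simp only [lagAuxG, lagAuxF, Function.comp]
  rw [if_pos (by omega : j ≤ j + i)]
  have h1 : j + i - j = i := by omega
  have h2 : (j + i + m).choose i = (i + (j + m)).choose (j + m) := by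
    rw [← Nat.choose_symm (by omega : j + m ≤ i + (j + m))]
    congr 1 <;> omega
  rw [h1, ← h2]
  ring

/-- The generating function of generalized Laguerre polynomials. -/
lemma lagGenFun (m : ℕ) (x : ℝ) (hx : 0 ≤ x) (t u : ℂ) (hu : u ≠ 0) (h1t : 1 - t = u⁻¹)
    (ht : ‖t‖ < 1) :
    HasSum (fun k : ℕ => t ^ k * (genLaguerre k m x : ℂ))
      (u ^ (m + 1) * Complex.exp (-(t * u) * x)) := by
  -- fiberwise sums in (j, i) order
  have hfib : ∀ j : ℕ, HasSum (fun i => lagAuxF m x t (j, i))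
      (u ^ (m + 1) * ((-(t * u) * x) ^ j / (j.factorial : ℂ))) := by
    intro j
    have h := (hasSum_choose_mul_geometric_of_norm_lt_one (j + m) ht).mul_left
      ((-(x:ℂ) * t) ^ j / (j.factorial : ℂ))
    have hval : ((-(x:ℂ) * t) ^ j / (j.factorial : ℂ)) * (1 / (1 - t) ^ (j + m + 1)) =
        u ^ (m + 1) * ((-(t * u) * x) ^ j / (j.factorial : ℂ)) := by
      rw [h1t]
      have hfac : (j.factorial : ℂ) ≠ 0 := Nat.cast_ne_zero.mpr j.factorial_ne_zero
      simp only [one_div, inv_pow, inv_inv]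
      ring
    rw [← hval]
    exact h
  have hV : HasSum (fun j : ℕ => u ^ (m + 1) * ((-(t * u) * x) ^ j / (j.factorial : ℂ)))
      (u ^ (m + 1) * Complex.exp (-(t * u) * x)) := by
    apply HasSum.mul_left
    rw [Complex.exp_eq_exp_ℂ]
    exact NormedSpace.expSeries_div_hasSum_exp _
  have htot : HasSum (lagAuxF m x t) (u ^ (m + 1) * Complex.exp (-(t * u) * x)) := by
    have h1 := (lagAuxF_summable m x hx t ht).hasSum
    have h2 := h1.prod_fiberwise hfib
    rwa [h2.unique hV] at h1
  -- reindex
  have hι : Function.Injective (fun p : ℕ × ℕ => (p.1 + p.2, p.1)) := by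
    rintro ⟨a, b⟩ ⟨c, d⟩ h
    simp only [Prod.mk.injEq] at h
    exact Prod.ext h.2 (by omega)
  have hzero : ∀ q ∉ Set.range (fun p : ℕ × ℕ => (p.1 + p.2, p.1)), lagAuxG m x t q = 0 := by
    rintro ⟨k, j⟩ hq
    rw [lagAuxG, if_neg]
    intro hle
    exact hq ⟨(j, k - j), by simp [Prod.ext_iff]; omega⟩
  have hg : HasSum (lagAuxG m x t) (u ^ (m + 1) * Complex.exp (-(t * u) * x)) :=
    (hι.hasSum_iff hzero).mp (by rwa [lagAux_comp])
  -- fiberwise over k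
  have hfib2 : ∀ k : ℕ, HasSum (fun j => lagAuxG m x t (k, j))
      (t ^ k * (genLaguerre k m x : ℂ)) := by
    intro k
    have h0 : ∀ j ∉ Finset.range (k + 1), lagAuxG m x t (k, j) = 0 := by
      intro j hj
      simp only [Finset.mem_range] at hj
      rw [lagAuxG, if_neg]
      omega
    have h := hasSum_sum_of_ne_finset_zero (L := SummationFilter.unconditional ℕ) h0
    convert h using 1
    rw [genLaguerre]
    push_cast
    rw [Finset.mul_sum]
    apply Finset.sum_congr rfl
    intro j hj
    simp only [Finset.mem_range] at hj
    rw [lagAuxG, if_pos (by omega : j ≤ k)]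
    ring
  exact hg.prod_fiberwise hfib2


/-- Laguerre expansion of exponentials: for `Re γ > -1/2`, `m ∈ ℕ` and `x ≥ 0`,
`∑_{k=0}^∞ γ^k/(1+γ)^{k+m+1} L_k^{(m)}(x) = e^{-γ x}` (convergent series). -/
theorem genLaguerre_exp_expansion (γ : ℂ) (hγ : -1 / 2 < γ.re) (m : ℕ) (x : ℝ)
    (hx : 0 ≤ x) :
    HasSum (fun k : ℕ => γ ^ k / (1 + γ) ^ (k + m + 1) * (genLaguerre k m x : ℂ))
      (Complex.exp (-γ * x)) := by

  have hu : (1 + γ) ≠ 0 := by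
    intro h
    have : (1 + γ).re = 0 := by rw [h]; simp
    simp [Complex.add_re] at this
    linarith
  have htu : γ / (1 + γ) * (1 + γ) = γ := div_mul_cancel₀ _ hu
  have h1t : 1 - γ / (1 + γ) = (1 + γ)⁻¹ := by field_simp; ring
  have ht : ‖γ / (1 + γ)‖ < 1 := by
    have h2 : ‖γ‖ ^ 2 < ‖1 + γ‖ ^ 2 := by
      rw [Complex.sq_norm, Complex.sq_norm,
        Complex.normSq_apply, Complex.normSq_apply]
      simp [Complex.add_re, Complex.add_im]
      nlinarith [sq_nonneg γ.im]
    have hlt : ‖γ‖ < ‖1 + γ‖ := lt_of_pow_lt_pow_left₀ 2 (norm_nonneg _) h2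
    rw [norm_div, div_lt_one (by simpa using norm_pos_iff.mpr hu)]
    exact hlt
  have h := lagGenFun m x hx (γ / (1 + γ)) (1 + γ) hu h1t ht
  rw [htu] at h
  have hmul := h.mul_left (((1 + γ) ^ (m + 1))⁻¹)
  have hfun : (fun k : ℕ => ((1 + γ) ^ (m + 1))⁻¹ *
      ((γ / (1 + γ)) ^ k * (genLaguerre k m x : ℂ))) =
      fun k : ℕ => γ ^ k / (1 + γ) ^ (k + m + 1) * (genLaguerre k m x : ℂ) := by
    funext k
    have h1 : ((1 + γ):ℂ) ^ (k + m + 1) = (1 + γ) ^ k * (1 + γ) ^ (m + 1) := by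
      ring
    rw [div_pow, h1, div_eq_mul_inv, div_eq_mul_inv, mul_inv]
    ring
  rw [hfun, inv_mul_cancel_left₀ (pow_ne_zero _ hu)] at hmul
  exact hmul
end

section
/- For every integer n ≥ 2, let φ_{n,1}(r) = sqrt((2/n)³ (n-2)!/(2n(n+1)!)) · (2r/n) L_{n-2}^{(3)}(2r/n) e^{-r/n} be the reduced radial wavefunction of the hydrogen np state. Then S_n := ∫₀^∞ r³ e^{-r} φ_{n,1}(r) dr = 8 n³ (n-1)^{n-3}/(n+1)^{n+3} · sqrt((n+1)!/(n-2)!). -/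
open MeasureTheory

/-- Reduced radial wavefunction of the hydrogen `np` state:
`φ_{n,1}(r) = √((2/n)³ (n-2)!/(2n(n+1)!)) · (2r/n) L_{n-2}^{(3)}(2r/n) e^{-r/n}`. -/
noncomputable def hydrogenRadial (n : ℕ) (r : ℝ) : ℝ :=
  Real.sqrt ((2 / (n : ℝ)) ^ 3 * ((n - 2).factorial : ℝ)
      / (2 * (n : ℝ) * ((n + 1).factorial : ℝ)))
    * (2 * r / (n : ℝ)) * genLaguerre (n - 2) 3 (2 * r / (n : ℝ)) * Real.exp (-r / (n : ℝ))

lemma integrableOn_pow_exp (m : ℕ) {a : ℝ} (ha : 0 < a) :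
    MeasureTheory.IntegrableOn (fun r : ℝ => r ^ m * Real.exp (-(a * r))) (Set.Ioi 0) := by
  have h := integrableOn_rpow_mul_exp_neg_mul_rpow (s := (m : ℝ)) (p := 1)
    (by exact_mod_cast neg_one_lt_zero.trans_le (by exact_mod_cast Nat.cast_nonneg m)) zero_lt_one ha
  simp only [Real.rpow_one, Real.rpow_natCast, neg_mul] at h
  simpa only [neg_mul] using h

lemma integral_pow_exp_s9 (m : ℕ) {a : ℝ} (ha : 0 < a) :
    ∫ r in Set.Ioi (0:ℝ), r ^ m * Real.exp (-(a * r)) = (m.factorial : ℝ) / a ^ (m + 1) := by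
  have h := Real.integral_rpow_mul_exp_neg_mul_Ioi (a := (m : ℝ) + 1) (by positivity) ha
  simp only [add_sub_cancel_right] at h
  rw [Real.Gamma_nat_eq_factorial] at h
  simp only [Real.rpow_natCast] at h
  rw [show ((m : ℝ) + 1) = ((m + 1 : ℕ) : ℝ) by push_cast; ring, Real.rpow_natCast] at h
  rw [h, one_div, inv_pow]
  field_simp

lemma coeff_id (c k j : ℕ) (h : j ≤ k) :
    ((k + c).choose (k - j) : ℝ) * ((j + c).factorial : ℝ) / (j.factorial : ℝ)
      = ((k + c).factorial : ℝ) / (k.factorial : ℝ) * (k.choose j : ℝ) := by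
  have h1 : (k + c).choose (k - j) * ((k - j).factorial * (k + c - (k - j)).factorial)
      = (k + c).factorial := by
    have := Nat.choose_mul_factorial_mul_factorial (show k - j ≤ k + c by omega)
    rw [← this]; ring
  rw [show k + c - (k - j) = j + c by omega] at h1
  have h2 : k.choose j * (j.factorial * (k - j).factorial) = k.factorial := by
    have := Nat.choose_mul_factorial_mul_factorial h
    rw [← this]; ring
  have h1' : ((k + c).choose (k - j) : ℝ) * (((k - j).factorial : ℝ) * ((j + c).factorial : ℝ))
      = ((k + c).factorial : ℝ) := by exact_mod_cast congrArg (Nat.cast (R := ℝ)) h1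
  have h2' : (k.choose j : ℝ) * ((j.factorial : ℝ) * ((k - j).factorial : ℝ))
      = (k.factorial : ℝ) := by exact_mod_cast congrArg (Nat.cast (R := ℝ)) h2
  have hj : (j.factorial : ℝ) ≠ 0 := by positivity
  have hk : (k.factorial : ℝ) ≠ 0 := by positivity
  rw [div_mul_eq_mul_div, div_eq_div_iff hj hk]
  linear_combination ((k.choose j : ℝ) * (j.factorial : ℝ)) * h1'
    - (((k + c).choose (k - j) : ℝ) * ((j + c).factorial : ℝ)) * h2'

lemma binom_sum (m : ℕ) (t : ℝ) :
    ∑ j ∈ Finset.range (m + 1), (m.choose j : ℝ) * (-t) ^ j = (1 - t) ^ m := by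
  rw [show (1 : ℝ) - t = -t + 1 by ring, add_pow]
  exact Finset.sum_congr rfl fun j hj => by ring

lemma sum_lemma (k : ℕ) (t : ℝ) :
    ∑ j ∈ Finset.range (k + 1),
        ((k + 3).choose (k - j) : ℝ) * ((j + 4).factorial : ℝ) / (j.factorial : ℝ) * (-t) ^ j
      = ((k + 3).factorial : ℝ) / (k.factorial : ℝ)
          * (4 * (1 - t) ^ k - k * (t * (1 - t) ^ (k - 1))) := by
  have split : ∀ j : ℕ, ((j + 4).factorial : ℝ) = ((j : ℝ) + 4) * ((j + 3).factorial : ℝ) := by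
    intro j
    rw [show j + 4 = (j + 3) + 1 from rfl, Nat.factorial_succ]
    push_cast; ring
  have step1 : ∑ j ∈ Finset.range (k + 1),
        ((k + 3).choose (k - j) : ℝ) * ((j + 4).factorial : ℝ) / (j.factorial : ℝ) * (-t) ^ j
      = (∑ j ∈ Finset.range (k + 1),
          (((k + 3).choose (k - j) : ℝ) * ((j + 3).factorial : ℝ) / (j.factorial : ℝ) * (-t) ^ j) * 4)
        + ∑ j ∈ Finset.range (k + 1),
          (j : ℝ) * (((k + 3).choose (k - j) : ℝ) * ((j + 3).factorial : ℝ) / (j.factorial : ℝ) * (-t) ^ j) := by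
    rw [← Finset.sum_add_distrib]
    refine Finset.sum_congr rfl fun j hj => ?_
    rw [split j]; ring
  rw [step1, ← Finset.sum_mul]
  have hT : ∑ j ∈ Finset.range (k + 1),
      (((k + 3).choose (k - j) : ℝ) * ((j + 3).factorial : ℝ) / (j.factorial : ℝ) * (-t) ^ j)
      = ((k + 3).factorial : ℝ) / (k.factorial : ℝ) * (1 - t) ^ k := by
    rw [← binom_sum k t, Finset.mul_sum]
    refine Finset.sum_congr rfl fun j hj => ?_
    rw [coeff_id 3 k j (by simp at hj; omega)]; ring
  rw [hT]
  rcases k with _ | m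
  · simp
  · rw [Finset.sum_range_succ']
    simp only [Nat.cast_zero, zero_mul, add_zero]
    have hV : ∑ i ∈ Finset.range (m + 1),
        ((i + 1 : ℕ) : ℝ) * (((m + 1 + 3).choose (m + 1 - (i + 1)) : ℝ)
          * ((i + 1 + 3).factorial : ℝ) / ((i + 1).factorial : ℝ) * (-t) ^ (i + 1))
        = ((m + 4).factorial : ℝ) / (m.factorial : ℝ) * (-t) * (1 - t) ^ m := by
      rw [← binom_sum m t, Finset.mul_sum]
      refine Finset.sum_congr rfl fun i hi => ?_
      have hi' : i ≤ m := by simp at hi; omega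
      have e1 : (m + 1) - (i + 1) = m - i := by omega
      have e2 : i + 1 + 3 = (i + 4) := by omega
      have e3 : m + 1 + 3 = m + 4 := by omega
      rw [e1, e2, e3]
      have hcoeff := coeff_id 4 m i hi'
      have hfac : ((i + 1).factorial : ℝ) = ((i : ℝ) + 1) * (i.factorial : ℝ) := by
        rw [Nat.factorial_succ]; push_cast; ring
      have hfi : (i.factorial : ℝ) ≠ 0 := by positivity
      have hfi1 : ((i : ℝ) + 1) ≠ 0 := by positivity
      have lhs_eq : ((i + 1 : ℕ) : ℝ) * (((m + 4).choose (m - i) : ℝ)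
            * ((i + 4).factorial : ℝ) / ((i + 1).factorial : ℝ) * (-t) ^ (i + 1))
          = (((m + 4).choose (m - i) : ℝ) * ((i + 4).factorial : ℝ) / (i.factorial : ℝ))
            * ((-t) * (-t) ^ i) := by
        rw [hfac, pow_succ]
        push_cast
        field_simp
      rw [lhs_eq, hcoeff]
      ring
    rw [hV]
    have hfm : (m.factorial : ℝ) ≠ 0 := by positivity
    have hfm1 : ((m + 1).factorial : ℝ) = ((m : ℝ) + 1) * (m.factorial : ℝ) := by
      rw [Nat.factorial_succ]; push_cast; ring
    rw [show m + 1 + 3 = m + 4 from rfl, show m + 1 - 1 = m from rfl, hfm1]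
    push_cast
    field_simp
    ring

/-- The hydrogen `1s → np` radial dipole integral:
`S_n = ∫₀^∞ r³ e^{-r} φ_{n,1}(r) dr = 8 n³ (n-1)^{n-3}/(n+1)^{n+3} √((n+1)!/(n-2)!)`. -/
theorem hydrogen_dipole_integral (n : ℕ) (hn : 2 ≤ n) :
    ∫ r in Set.Ioi (0 : ℝ), r ^ 3 * Real.exp (-r) * hydrogenRadial n r
      = 8 * (n : ℝ) ^ 3 * ((n : ℝ) - 1) ^ (n - 3) / ((n : ℝ) + 1) ^ (n + 3)
          * Real.sqrt (((n + 1).factorial : ℝ) / ((n - 2).factorial : ℝ)) := by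
  obtain ⟨k, rfl⟩ : ∃ k, n = k + 2 := ⟨n - 2, by omega⟩
  clear hn
  set N : ℝ := (k : ℝ) + 2 with hNdef
  have hN0 : (0:ℝ) < N := by positivity
  have hN1 : (0:ℝ) < N + 1 := by positivity
  set a : ℝ := (N + 1) / N with hadef
  have ha0 : 0 < a := by positivity
  set t : ℝ := 2 / (N + 1) with htdef
  set F : ℝ := ((k + 3).factorial : ℝ) / (k.factorial : ℝ) with hFdef
  have hF0 : 0 < F := by positivity
  set s : ℝ := Real.sqrt F with hsdef
  have hs0 : 0 < s := Real.sqrt_pos.mpr hF0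
  have hs2 : s ^ 2 = F := Real.sq_sqrt hF0.le
  have hcast : ((k + 2 : ℕ) : ℝ) = N := by push_cast [hNdef]; ring
  clear_value N a t F s
  have hc0 : Real.sqrt ((2 / N) ^ 3 * (k.factorial : ℝ) / (2 * N * ((k + 3).factorial : ℝ)))
      = 2 / (N ^ 2 * s) := by
    have hfk : (k.factorial : ℝ) ≠ 0 := by positivity
    have hfk3 : ((k + 3).factorial : ℝ) ≠ 0 := by positivity
    have hss : s ^ 2 * (k.factorial : ℝ) = ((k + 3).factorial : ℝ) := by
      rw [hs2, hFdef]; field_simp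
    rw [show (2 / N) ^ 3 * (k.factorial : ℝ) / (2 * N * ((k + 3).factorial : ℝ))
        = (2 / (N ^ 2 * s)) ^ 2 by
      field_simp
      linear_combination hss]
    exact Real.sqrt_sq (by positivity)
  have key : ∀ r : ℝ, r ^ 3 * Real.exp (-r) * hydrogenRadial (k + 2) r
      = ∑ j ∈ Finset.range (k + 1),
          (2 / (N ^ 2 * s) * (2 / N) * ((k + 3).choose (k - j) : ℝ) * (-(2 / N)) ^ j
            / (j.factorial : ℝ)) * (r ^ (j + 4) * Real.exp (-(a * r))) := by
    intro r
    rw [hydrogenRadial, genLaguerre]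
    simp only [Nat.add_sub_cancel, show k + 2 + 1 = k + 3 from rfl, hcast]
    rw [hc0]
    rw [Finset.mul_sum, Finset.sum_mul, Finset.mul_sum]
    refine Finset.sum_congr rfl fun j hj => ?_
    have hexp : Real.exp (-r) * Real.exp (-r / N) = Real.exp (-(a * r)) := by
      rw [← Real.exp_add]
      congr 1
      rw [hadef]
      field_simp
      ring
    have hpow : (-(2 * r / N)) ^ j = (-(2 / N)) ^ j * r ^ j := by
      rw [show -(2 * r / N) = (-(2 / N)) * r by ring, mul_pow]
    calc r ^ 3 * Real.exp (-r) * (2 / (N ^ 2 * s) * (2 * r / N)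
          * (((k + 3).choose (k - j) : ℝ) * (-(2 * r / N)) ^ j / (j.factorial : ℝ))
          * Real.exp (-r / N))
        = (2 / (N ^ 2 * s) * (2 / N) * ((k + 3).choose (k - j) : ℝ) * (-(2 / N)) ^ j
            / (j.factorial : ℝ) * r ^ (j + 4)) * (Real.exp (-r) * Real.exp (-r / N)) := by
          rw [hpow]; ring
      _ = _ := by rw [hexp]; ring
  calc ∫ r in Set.Ioi (0 : ℝ), r ^ 3 * Real.exp (-r) * hydrogenRadial (k + 2) r
      = ∫ r in Set.Ioi (0 : ℝ), ∑ j ∈ Finset.range (k + 1),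
          (2 / (N ^ 2 * s) * (2 / N) * ((k + 3).choose (k - j) : ℝ) * (-(2 / N)) ^ j
            / (j.factorial : ℝ)) * (r ^ (j + 4) * Real.exp (-(a * r))) := by
        exact integral_congr_ae (Filter.Eventually.of_forall fun r => key r)
    _ = ∑ j ∈ Finset.range (k + 1),
          (2 / (N ^ 2 * s) * (2 / N) * ((k + 3).choose (k - j) : ℝ) * (-(2 / N)) ^ j
            / (j.factorial : ℝ)) * (((j + 4).factorial : ℝ) / a ^ (j + 4 + 1)) := by
        rw [integral_finset_sum _ (fun j _ => ((integrableOn_pow_exp (j + 4) ha0).const_mul _))]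
        refine Finset.sum_congr rfl fun j hj => ?_
        rw [integral_const_mul, integral_pow_exp_s9 (j + 4) ha0]
    _ = (4 / (N ^ 3 * s * a ^ 5)) * ∑ j ∈ Finset.range (k + 1),
          ((k + 3).choose (k - j) : ℝ) * ((j + 4).factorial : ℝ) / (j.factorial : ℝ) * (-t) ^ j := by
        rw [Finset.mul_sum]
        refine Finset.sum_congr rfl fun j hj => ?_
        have haj : a ^ (j + 4 + 1) = a ^ 5 * a ^ j := by
          rw [show j + 4 + 1 = 5 + j from by omega, pow_add]
        have hmt : -t = -(2 / N) / a := by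
          rw [htdef, hadef]
          field_simp
        have hXt : (-t) ^ j = (-(2 / N)) ^ j / a ^ j := by rw [hmt, div_pow]
        have hfj : (j.factorial : ℝ) ≠ 0 := by positivity
        rw [haj, hXt]
        field_simp
        ring
    _ = _ := by
        rw [sum_lemma k t]
        have hE1 : 4 * (1 - t) ^ k - (k : ℝ) * (t * (1 - t) ^ (k - 1))
            = 2 * N * (N - 1) ^ (k - 1) / (N + 1) ^ k := by
          rcases k with _ | m
          · rw [htdef, hNdef]; norm_num
          · have h1t : 1 - t = (N - 1) / (N + 1) := by
              rw [htdef]; field_simp; ring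
            rw [show m + 1 - 1 = m from rfl, h1t, htdef, div_pow, div_pow, hNdef]
            push_cast
            field_simp
            ring
        rw [hE1]
        rw [show ((k + 2 : ℕ) : ℝ) = N from hcast,
          show k + 2 - 3 = k - 1 from by omega, show k + 2 + 3 = k + 5 from by omega,
          show k + 2 + 1 = k + 3 from rfl, show k + 2 - 2 = k from by omega, ← hFdef, ← hsdef]
        rw [← hs2, hadef]
        field_simp
        ring
end

section
/- Let l ∈ ℕ and let h_l be the self-adjoint operator on L²(0,∞) associated with the quadratic form q(g) = (1/2)∫₀^∞ g'(r)² dr + ∫₀^∞ (l(l+1)/(2r²) - 1/r) g(r)² dr on form domain H¹₀(0,∞). Then h_l ≥ -1/(2(l+1)²), i.e., q(g) ≥ -(1/(2(l+1)²)) ‖g‖²_{L²} for all g in the form domain. -/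
open MeasureTheory

open Set Filter in
set_option maxHeartbeats 1600000 in
/-- Lower bound for the radial hydrogen quadratic form with angular momentum `l`:
for `g ∈ H¹₀(0,∞)` (here: `g ∈ H¹(0,∞)` continuous up to `0` with `g 0 = 0`, with
all the integrals involved converging),
`(1/2)∫ g'² + ∫ (l(l+1)/(2r²) - 1/r) g² ≥ -(1/(2(l+1)²)) ∫ g²`. -/
theorem radial_hydrogen_form_lower_bound
    (l : ℕ) (g g' : ℝ → ℝ)
    (hderiv : ∀ r ∈ Set.Ioi (0 : ℝ), HasDerivAt g (g' r) r)
    (hcont : ContinuousOn g (Set.Ici (0 : ℝ)))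
    (h0 : g 0 = 0)
    (hg_L2 : IntegrableOn (fun r => (g r) ^ 2) (Set.Ioi (0 : ℝ)))
    (hg'_L2 : IntegrableOn (fun r => (g' r) ^ 2) (Set.Ioi (0 : ℝ)))
    (hpot : IntegrableOn
      (fun r => ((l : ℝ) * ((l : ℝ) + 1) / (2 * r ^ 2) - 1 / r) * (g r) ^ 2)
      (Set.Ioi (0 : ℝ))) :
    -(1 / (2 * ((l : ℝ) + 1) ^ 2)) * ∫ r in Set.Ioi (0 : ℝ), (g r) ^ 2
      ≤ (1 / 2) * (∫ r in Set.Ioi (0 : ℝ), (g' r) ^ 2)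
        + ∫ r in Set.Ioi (0 : ℝ),
            ((l : ℝ) * ((l : ℝ) + 1) / (2 * r ^ 2) - 1 / r) * (g r) ^ 2 := by
  set a : ℝ := (l : ℝ) + 1 with ha_def
  have hl0 : (0:ℝ) ≤ (l:ℝ) := Nat.cast_nonneg l
  have ha1 : (1:ℝ) ≤ a := by simp only [ha_def]; linarith
  have ha0 : (0:ℝ) < a := lt_of_lt_of_le one_pos ha1
  -- measurability of g and g' on (0,∞)
  have hgm : AEStronglyMeasurable g (volume.restrict (Ioi (0:ℝ))) :=
    (hcont.mono Ioi_subset_Ici_self).aestronglyMeasurable measurableSet_Ioi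
  have hg'm : AEStronglyMeasurable g' (volume.restrict (Ioi (0:ℝ))) := by
    refine (measurable_deriv g).aestronglyMeasurable.congr ?_
    rw [Filter.EventuallyEq, ae_restrict_iff' measurableSet_Ioi]
    exact Filter.Eventually.of_forall fun r hr => (hderiv r hr).deriv
  -- local integrability of g'
  have hg'int : ∀ u v : ℝ, 0 ≤ u → IntegrableOn g' (Ioc u v) := by
    intro u v hu
    have hsub : Ioc u v ⊆ Ioi 0 := fun r hr => hu.trans_lt hr.1
    have h1 : IntegrableOn (fun r => (1 + g' r ^ 2) / 2) (Ioc u v) :=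
      ((integrableOn_const measure_Ioc_lt_top.ne).add
        (hg'_L2.mono_set hsub)).div_const 2
    refine h1.mono' (hg'm.mono_set hsub) ?_
    refine Filter.Eventually.of_forall fun r => ?_
    rw [Real.norm_eq_abs]
    nlinarith [sq_nonneg (|g' r| - 1), sq_abs (g' r), abs_nonneg (g' r)]
  -- FTC from the origin
  have hg_eq : ∀ ε : ℝ, 0 < ε → g ε = ∫ r in Ioc (0:ℝ) ε, g' r := by
    intro ε hε
    have := intervalIntegral.integral_eq_sub_of_hasDeriv_right_of_le hε.le
      (hcont.mono (Icc_subset_Ici_self)) (fun x hx => (hderiv x hx.1).hasDerivWithinAt)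
      ((intervalIntegrable_iff_integrableOn_Ioc_of_le hε.le).2 (hg'int 0 ε le_rfl))
    rw [h0, sub_zero] at this
    rw [← this, intervalIntegral.integral_of_le hε.le]
  -- Cauchy–Schwarz style bound near the origin
  have hbound : ∀ ε : ℝ, 0 < ε → (g ε) ^ 2 ≤ ε * ∫ r in Ioc (0:ℝ) ε, g' r ^ 2 := by
    intro ε hε
    set I : ℝ := ∫ r in Ioc (0:ℝ) ε, g' r ^ 2 with hI_def
    have hInn : 0 ≤ I := setIntegral_nonneg measurableSet_Ioc fun r _ => sq_nonneg _
    have habs : ∀ t : ℝ, 0 < t → |g ε| ≤ (t * ε + I / t) / 2 := by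
      intro t ht
      rw [hg_eq ε hε]
      rw [← Real.norm_eq_abs]
      refine (norm_integral_le_integral_norm _).trans ?_
      simp only [Real.norm_eq_abs]
      have hle : ∫ r in Ioc (0:ℝ) ε, |g' r| ≤ ∫ r in Ioc (0:ℝ) ε, (t + g' r ^ 2 / t) / 2 := by
        refine setIntegral_mono_on ((hg'int 0 ε le_rfl).abs) ?_ measurableSet_Ioc ?_
        · exact (((integrableOn_const measure_Ioc_lt_top.ne).add
            ((hg'_L2.mono_set (fun r hr => hr.1)).div_const t)).div_const 2)
        · intro r _
          have h2 : g' r ^ 2 / t = |g' r| ^ 2 / t := by rw [sq_abs]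
          rw [h2, le_div_iff₀ two_pos, ← sub_le_iff_le_add', le_div_iff₀ ht]
          nlinarith [sq_nonneg (|g' r| - t)]
      calc ∫ r in Ioc (0:ℝ) ε, |g' r| ≤ ∫ r in Ioc (0:ℝ) ε, (t + g' r ^ 2 / t) / 2 := hle
        _ = (t * ε + I / t) / 2 := by
            rw [integral_div, integral_add (show IntegrableOn (fun _ => t) (Ioc (0:ℝ) ε) volume from integrableOn_const measure_Ioc_lt_top.ne)
              (show IntegrableOn (fun r => g' r ^ 2 / t) (Ioc (0:ℝ) ε) volume from (hg'_L2.mono_set (fun r (hr : r ∈ Ioc (0:ℝ) ε) => hr.1)).div_const t)]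
            rw [setIntegral_const, integral_div, Real.volume_real_Ioc_of_le hε.le, smul_eq_mul, sub_zero,
              ← hI_def]
            ring
    rcases eq_or_lt_of_le hInn with hI0 | hIpos
    · have hz : |g ε| = 0 := by
        by_contra hne
        have hpos : 0 < |g ε| := lt_of_le_of_ne (abs_nonneg _) (Ne.symm hne)
        have := habs (|g ε| / ε) (div_pos hpos hε)
        rw [← hI0] at this
        have h1 : |g ε| / ε * ε = |g ε| := div_mul_cancel₀ _ hε.ne'
        rw [h1] at this
        simp at this
        linarith
      have : g ε = 0 := abs_eq_zero.mp hz
      rw [this]; simpa using mul_nonneg hε.le hInn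
    · set t : ℝ := Real.sqrt (I / ε) with ht_def
      have htpos : 0 < t := Real.sqrt_pos.2 (div_pos hIpos hε)
      have ht2 : t ^ 2 = I / ε := Real.sq_sqrt (div_pos hIpos hε).le
      have htt : t * t = I / ε := by rw [← ht2]; ring
      have ht2' : t * ε * t = I := by
        rw [show t * ε * t = t * t * ε by ring, htt, div_mul_cancel₀ _ hε.ne']
      have hIt : I / t = t * ε := by
        rw [div_eq_iff htpos.ne']; exact ht2'.symm
      have := habs t htpos
      rw [hIt] at this
      have h2 : |g ε| ≤ t * ε := by linarith
      have := sq_le_sq' (by linarith [abs_nonneg (g ε)]) h2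
      rw [sq_abs] at this
      calc (g ε)^2 ≤ (t * ε)^2 := this
        _ = (t * ε * t) * ε := by ring
        _ = ε * I := by rw [ht2']; ring
  -- boundary function
  set F : ℝ → ℝ := fun r => a / 2 * ((g r) ^ 2 / r) - 1 / (2 * a) * (g r) ^ 2 with hF_def
  set D : ℝ → ℝ := fun r =>
    a / 2 * ((2 * g r * g' r * r - (g r) ^ 2) / r ^ 2) - 1 / (2 * a) * (2 * g r * g' r)
    with hD_def
  have hF' : ∀ r : ℝ, 0 < r → HasDerivAt F (D r) r := by
    intro r hr
    have hg2 : HasDerivAt (fun r => (g r) ^ 2) (2 * g r * g' r) r := by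
      have := (hderiv r hr).fun_pow 2
      simpa [mul_comm, mul_assoc, mul_left_comm] using this
    have hdiv : HasDerivAt (fun r => (g r) ^ 2 / r)
        ((2 * g r * g' r * r - (g r) ^ 2 * 1) / r ^ 2) r :=
      hg2.div (hasDerivAt_id r) hr.ne'
    have := ((hdiv.const_mul (a / 2)).fun_sub (hg2.const_mul (1 / (2 * a))))
    simpa [hF_def, hD_def, mul_one] using this
  -- the full integrand
  set Q : ℝ → ℝ := fun r =>
    (1 / 2) * (g' r) ^ 2 + ((l : ℝ) * a / (2 * r ^ 2) - 1 / r) * (g r) ^ 2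
      + 1 / (2 * a ^ 2) * (g r) ^ 2 with hQ_def
  have hQint : IntegrableOn Q (Ioi (0:ℝ)) :=
    ((hg'_L2.const_mul (1/2)).add hpot).add (hg_L2.const_mul _)
  -- pointwise completion of the square
  have hptwise : ∀ r : ℝ, 0 < r →
      Q r = (1 / 2) * (g' r - (a / r - 1 / a) * g r) ^ 2 + D r := by
    intro r hr
    have hla : (l : ℝ) = a - 1 := by rw [ha_def]; ring
    simp only [hQ_def, hD_def, hla]
    field_simp
    ring
  -- key interval estimate
  have hkey : ∀ ε R : ℝ, 0 < ε → ε ≤ R → F R - F ε ≤ ∫ r in Ioc ε R, Q r := by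
    intro ε R hε hεR
    have hsub : Ioc ε R ⊆ Ioi 0 := fun r hr => hε.trans hr.1
    obtain ⟨M, hM⟩ : ∃ M, ∀ r ∈ Icc ε R, |g r| ≤ M := by
      obtain ⟨M, hM⟩ := isCompact_Icc.exists_bound_of_continuousOn
        (hcont.mono (fun r (hr : r ∈ Icc ε R) => hε.le.trans hr.1))
      exact ⟨M, fun r hr => by simpa using hM r hr⟩
    have hM0 : 0 ≤ M := le_trans (abs_nonneg _) (hM ε ⟨le_rfl, hεR⟩)
    -- measurability of D on the interval
    have hg1 : AEStronglyMeasurable g (volume.restrict (Ioc ε R)) := hgm.mono_set hsub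
    have hg1' : AEStronglyMeasurable g' (volume.restrict (Ioc ε R)) := hg'm.mono_set hsub
    have hDm : AEStronglyMeasurable D (volume.restrict (Ioc ε R)) := by
      simp only [hD_def]
      have hga := hg1.aemeasurable
      have hg'a := hg1'.aemeasurable
      refine AEMeasurable.aestronglyMeasurable (AEMeasurable.sub ?_ ?_)
      · exact ((((((aemeasurable_const.mul hga).mul hg'a).mul
          aemeasurable_id).sub (hga.pow aemeasurable_const)).div
          (aemeasurable_id.pow aemeasurable_const)).const_mul _)
      · exact ((aemeasurable_const.mul hga).mul hg'a).const_mul _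
    -- integrability of D on the interval
    set C1 : ℝ := a * M * R / ε ^ 2 + M / a with hC1_def
    set C2 : ℝ := a * M ^ 2 / (2 * ε ^ 2) with hC2_def
    have hbint : IntegrableOn (fun r => C1 * |g' r| + C2) (Ioc ε R) :=
      (((hg'int ε R hε.le).abs.const_mul C1).add
        (integrableOn_const measure_Ioc_lt_top.ne))
    have hDint : IntegrableOn D (Ioc ε R) := by
      refine hbint.mono' hDm ?_
      rw [ae_restrict_iff' measurableSet_Ioc]
      refine Filter.Eventually.of_forall fun r hr => ?_
      have hr0 : 0 < r := hε.trans hr.1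
      have hgr : |g r| ≤ M := hM r ⟨hr.1.le, hr.2⟩
      have hg'r : 0 ≤ |g' r| := abs_nonneg _
      have h1 : |2 * g r * g' r * r - (g r) ^ 2| ≤ 2 * M * |g' r| * R + M ^ 2 := by
        have t1 : |2 * g r * g' r * r - (g r) ^ 2| ≤ |2 * g r * g' r * r| + |(g r) ^ 2| := by
          rw [sub_eq_add_neg]
          exact (abs_add_le _ _).trans (by rw [abs_neg])
        have t2 : |2 * g r * g' r * r| = 2 * |g r| * |g' r| * r := by
          rw [abs_mul, abs_mul, abs_mul, abs_of_pos hr0]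
          norm_num
        have t3 : |(g r) ^ 2| = |g r| ^ 2 := by rw [abs_pow]
        have t4 : 2 * |g r| * |g' r| * r ≤ 2 * M * |g' r| * R := by
          gcongr
          exact hr.2
        have t5 : |g r| ^ 2 ≤ M ^ 2 := by
          have := pow_le_pow_left₀ (abs_nonneg (g r)) hgr 2
          simpa using this
        calc |2 * g r * g' r * r - (g r) ^ 2|
            ≤ |2 * g r * g' r * r| + |(g r) ^ 2| := t1
          _ = 2 * |g r| * |g' r| * r + |g r| ^ 2 := by rw [t2, t3]
          _ ≤ 2 * M * |g' r| * R + M ^ 2 := add_le_add t4 t5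
      have h2 : |(2 * g r * g' r * r - (g r) ^ 2) / r ^ 2|
          ≤ (2 * M * |g' r| * R + M ^ 2) / ε ^ 2 := by
        rw [abs_div, abs_of_pos (pow_pos hr0 2)]
        have hR0 : (0:ℝ) ≤ R := hε.le.trans hεR
        refine div_le_div₀ (by nlinarith [mul_nonneg (mul_nonneg (mul_nonneg
          (by norm_num : (0:ℝ) ≤ 2) hM0) hg'r) hR0, sq_nonneg M]) h1 (pow_pos hε 2) ?_
        exact pow_le_pow_left₀ hε.le hr.1.le 2
      have h3 : |D r| ≤ a / 2 * ((2 * M * |g' r| * R + M ^ 2) / ε ^ 2)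
          + 1 / (2 * a) * (2 * M * |g' r|) := by
        have t1 : |D r| ≤ |a / 2 * ((2 * g r * g' r * r - (g r) ^ 2) / r ^ 2)|
            + |1 / (2 * a) * (2 * g r * g' r)| := by
          simp only [hD_def]
          rw [sub_eq_add_neg]
          exact (abs_add_le _ _).trans (by rw [abs_neg])
        have t2 : |a / 2 * ((2 * g r * g' r * r - (g r) ^ 2) / r ^ 2)|
            ≤ a / 2 * ((2 * M * |g' r| * R + M ^ 2) / ε ^ 2) := by
          rw [abs_mul, abs_of_pos (by linarith : (0:ℝ) < a / 2)]
          exact mul_le_mul_of_nonneg_left h2 (by linarith)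
        have t3 : |1 / (2 * a) * (2 * g r * g' r)| ≤ 1 / (2 * a) * (2 * M * |g' r|) := by
          have e : |1 / (2 * a) * (2 * g r * g' r)| = 1 / (2 * a) * (2 * |g r| * |g' r|) := by
            rw [abs_mul, abs_mul, abs_mul, abs_of_pos (show (0:ℝ) < 1 / (2 * a) by positivity)]
            norm_num
          rw [e]
          exact mul_le_mul_of_nonneg_left
            (mul_le_mul_of_nonneg_right (by linarith) hg'r) (by positivity)
        linarith
      rw [Real.norm_eq_abs]
      refine h3.trans (le_of_eq ?_)
      rw [hC1_def, hC2_def]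
      field_simp
      ring
    -- FTC on the interval
    have hFTC : ∫ r in Ioc ε R, D r = F R - F ε := by
      rw [← intervalIntegral.integral_of_le hεR]
      refine intervalIntegral.integral_eq_sub_of_hasDerivAt (fun x hx => ?_)
        ((intervalIntegrable_iff_integrableOn_Ioc_of_le hεR).2 hDint)
      rw [uIcc_of_le hεR] at hx
      exact hF' x (hε.trans_le hx.1)
    have hQR : IntegrableOn Q (Ioc ε R) := hQint.mono_set hsub
    have hSnn : 0 ≤ ∫ r in Ioc ε R, (Q r - D r) := by
      refine setIntegral_nonneg measurableSet_Ioc fun r hr => ?_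
      rw [hptwise r (hε.trans hr.1)]
      have := sq_nonneg (g' r - (a / r - 1 / a) * g r)
      linarith
    have hsplit : ∫ r in Ioc ε R, Q r
        = (∫ r in Ioc ε R, (Q r - D r)) + ∫ r in Ioc ε R, D r := by
      rw [integral_sub hQR hDint]
      ring
    rw [hsplit, hFTC]
    linarith
  -- sequence of lower cutoffs
  set es : ℕ → ℝ := fun n => 1 / (n + 1) with hes_def
  have hes_pos : ∀ n : ℕ, 0 < es n := fun n => by positivity
  have hes_to : Tendsto es atTop (nhds 0) := tendsto_one_div_add_atTop_nhds_zero_nat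
  -- the tail integral of g'^2 near zero tends to 0
  have hI_to : Tendsto (fun n => ∫ r in Ioc (0:ℝ) (es n), g' r ^ 2) atTop (nhds 0) := by
    have hanti : Antitone fun n : ℕ => Ioc (0:ℝ) (es n) := by
      intro m n hmn
      refine Ioc_subset_Ioc le_rfl ?_
      simp only [hes_def]
      refine one_div_le_one_div_of_le (by positivity) ?_
      have : (m : ℝ) ≤ (n : ℝ) := Nat.cast_le.2 hmn
      linarith
    have h := tendsto_setIntegral_of_antitone (μ := volume) (f := fun r => g' r ^ 2)
      (s := fun n : ℕ => Ioc (0:ℝ) (es n)) (fun n => measurableSet_Ioc) hanti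
      ⟨0, hg'_L2.mono_set (fun r hr => hr.1)⟩
    have hempty : ⋂ n, Ioc (0:ℝ) (es n) = (∅ : Set ℝ) := by
      ext x
      simp only [mem_iInter, mem_Ioc, mem_empty_iff_false, iff_false, not_forall]
      by_cases hx : 0 < x
      · obtain ⟨n, hn⟩ := exists_nat_gt (1 / x)
        refine ⟨n, ?_⟩
        rw [not_and_or]
        right
        rw [not_le, hes_def]
        rw [div_lt_iff₀ (by positivity), ← div_lt_iff₀' hx]
        calc 1 / x < (n : ℝ) := hn
          _ ≤ (n : ℝ) + 1 := by linarith
      · exact ⟨0, by rw [not_and_or]; left; exact hx⟩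
    rw [hempty] at h
    simpa using h
  -- the boundary term near zero tends to 0
  have hF0 : Tendsto (fun n => F (es n)) atTop (nhds 0) := by
    have hbnd_to : Tendsto (fun n => a / 2 * (∫ r in Ioc (0:ℝ) (es n), g' r ^ 2)
        + 1 / (2 * a) * (es n * ∫ r in Ioc (0:ℝ) (es n), g' r ^ 2)) atTop (nhds 0) := by
      have := ((hI_to.const_mul (a / 2)).add
        ((hes_to.mul hI_to).const_mul (1 / (2 * a))))
      simpa using this
    refine squeeze_zero_norm (fun n => ?_) hbnd_to
    · have hεn := hes_pos n
      have hb := hbound (es n) hεn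
      have hInn : 0 ≤ ∫ r in Ioc (0:ℝ) (es n), g' r ^ 2 :=
        setIntegral_nonneg measurableSet_Ioc fun r _ => sq_nonneg _
      have h1 : (g (es n)) ^ 2 / es n ≤ ∫ r in Ioc (0:ℝ) (es n), g' r ^ 2 := by
        rw [div_le_iff₀ hεn]
        linarith [hb]
      have h2 : ‖F (es n)‖ ≤ a / 2 * ((g (es n)) ^ 2 / es n) + 1 / (2 * a) * (g (es n)) ^ 2 := by
        rw [Real.norm_eq_abs, hF_def]
        have t1 : |a / 2 * ((g (es n)) ^ 2 / es n) - 1 / (2 * a) * (g (es n)) ^ 2|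
            ≤ |a / 2 * ((g (es n)) ^ 2 / es n)| + |1 / (2 * a) * (g (es n)) ^ 2| := by
          rw [sub_eq_add_neg]
          exact (abs_add_le _ _).trans (by rw [abs_neg])
        refine t1.trans (le_of_eq ?_)
        rw [abs_of_nonneg (by positivity), abs_of_nonneg (by positivity)]
      refine h2.trans ?_
      have h3 : a / 2 * ((g (es n)) ^ 2 / es n)
          ≤ a / 2 * (∫ r in Ioc (0:ℝ) (es n), g' r ^ 2) :=
        mul_le_mul_of_nonneg_left h1 (by positivity)
      have h4 : 1 / (2 * a) * (g (es n)) ^ 2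
          ≤ 1 / (2 * a) * (es n * ∫ r in Ioc (0:ℝ) (es n), g' r ^ 2) :=
        mul_le_mul_of_nonneg_left hb (by positivity)
      linarith
  -- sequence of upper cutoffs
  have hRex : ∀ n : ℕ, ∃ R : ℝ, ((n : ℝ) + 1) ≤ R ∧ (g R) ^ 2 ≤ 1 / ((n : ℝ) + 1) := by
    intro n
    by_contra hcon
    push_neg at hcon
    have hlt := hg_L2.measure_ge_lt_top (show (0:ℝ) < 1 / ((n : ℝ) + 1) by positivity)
    have hsup : Ici ((n : ℝ) + 1) ⊆ {x | 1 / ((n : ℝ) + 1) ≤ g x ^ 2} :=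
      fun x hx => (hcon x hx).le
    have hIci : (volume.restrict (Ioi (0:ℝ))) (Ici ((n : ℝ) + 1)) = ⊤ := by
      have hss : Ici ((n : ℝ) + 1) ∩ Ioi 0 = Ici ((n : ℝ) + 1) :=
        inter_eq_self_of_subset_left
          (fun x (hx : ((n : ℝ) + 1) ≤ x) => lt_of_lt_of_le (by positivity) hx)
      rw [Measure.restrict_apply measurableSet_Ici, hss, Real.volume_Ici]
    have := lt_of_le_of_lt (le_trans hIci.ge (measure_mono hsup)) hlt
    exact absurd this (lt_irrefl _)
  set Rs : ℕ → ℝ := fun n => (hRex n).choose with hRs_def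
  have hRs1 : ∀ n : ℕ, ((n : ℝ) + 1) ≤ Rs n := fun n => (hRex n).choose_spec.1
  have hRs2 : ∀ n : ℕ, (g (Rs n)) ^ 2 ≤ 1 / ((n : ℝ) + 1) := fun n => (hRex n).choose_spec.2
  have hRs_pos : ∀ n : ℕ, 0 < Rs n := fun n => lt_of_lt_of_le (by positivity) (hRs1 n)
  have hRs_to : Tendsto Rs atTop atTop :=
    tendsto_atTop_mono hRs1 (tendsto_atTop_add_const_right _ 1 tendsto_natCast_atTop_atTop)
  -- the boundary term at infinity tends to 0
  have hFR : Tendsto (fun n => F (Rs n)) atTop (nhds 0) := by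
    have hto : Tendsto (fun n : ℕ => 1 / ((n : ℝ) + 1)) atTop (nhds 0) :=
      tendsto_one_div_add_atTop_nhds_zero_nat
    have hbnd_to : Tendsto (fun n : ℕ => a / 2 * (1 / ((n : ℝ) + 1) / ((n : ℝ) + 1))
        + 1 / (2 * a) * (1 / ((n : ℝ) + 1))) atTop (nhds 0) := by
      have := ((hto.mul hto).const_mul (a / 2)).add (hto.const_mul (1 / (2 * a)))
      simpa [div_div, div_eq_mul_inv] using this
    refine squeeze_zero_norm (fun n => ?_) hbnd_to
    · have hn1 : (0:ℝ) < (n : ℝ) + 1 := by positivity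
      have h1 : (g (Rs n)) ^ 2 / Rs n ≤ 1 / ((n : ℝ) + 1) / ((n : ℝ) + 1) :=
        div_le_div₀ (by positivity) (hRs2 n) hn1 (hRs1 n)
      have h2 : ‖F (Rs n)‖ ≤ a / 2 * ((g (Rs n)) ^ 2 / Rs n) + 1 / (2 * a) * (g (Rs n)) ^ 2 := by
        rw [Real.norm_eq_abs, hF_def]
        have t1 : |a / 2 * ((g (Rs n)) ^ 2 / Rs n) - 1 / (2 * a) * (g (Rs n)) ^ 2|
            ≤ |a / 2 * ((g (Rs n)) ^ 2 / Rs n)| + |1 / (2 * a) * (g (Rs n)) ^ 2| := by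
          rw [sub_eq_add_neg]
          exact (abs_add_le _ _).trans (by rw [abs_neg])
        refine t1.trans (le_of_eq ?_)
        have hp : (0:ℝ) ≤ (g (Rs n)) ^ 2 / Rs n := div_nonneg (sq_nonneg _) (hRs_pos n).le
        rw [abs_of_nonneg (by positivity), abs_of_nonneg (by positivity)]
      refine h2.trans ?_
      have h3 : a / 2 * ((g (Rs n)) ^ 2 / Rs n) ≤ a / 2 * (1 / ((n : ℝ) + 1) / ((n : ℝ) + 1)) :=
        mul_le_mul_of_nonneg_left h1 (by positivity)
      have h4 : 1 / (2 * a) * (g (Rs n)) ^ 2 ≤ 1 / (2 * a) * (1 / ((n : ℝ) + 1)) :=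
        mul_le_mul_of_nonneg_left (hRs2 n) (by positivity)
      linarith
  have hesRs : ∀ n : ℕ, es n ≤ Rs n := by
    intro n
    have h1 : es n ≤ 1 := by
      rw [hes_def]
      rw [div_le_one (by positivity)]
      simp
    have h2 : (1:ℝ) ≤ (n : ℝ) + 1 := by
      have : (0:ℝ) ≤ (n : ℝ) := Nat.cast_nonneg n
      linarith
    linarith [hRs1 n]
  -- convergence of the truncated integrals
  have hint_to : Tendsto (fun n => ∫ r in Ioc (es n) (Rs n), Q r) atTop
      (nhds (∫ r in Ioi (0:ℝ), Q r)) := by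
    have hsubn : ∀ n : ℕ, Ioc (es n) (Rs n) ⊆ Ioi (0:ℝ) :=
      fun n r hr => (hes_pos n).trans hr.1
    have heq : ∀ n : ℕ, ∫ r in Ioc (es n) (Rs n), Q r
        = ∫ r in Ioi (0:ℝ), (Ioc (es n) (Rs n)).indicator Q r := by
      intro n
      rw [integral_indicator measurableSet_Ioc, Measure.restrict_restrict measurableSet_Ioc,
        inter_eq_self_of_subset_left (hsubn n)]
    simp only [heq]
    refine tendsto_integral_of_dominated_convergence (fun r => ‖Q r‖)
      (fun n => hQint.1.indicator measurableSet_Ioc) hQint.norm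
      (fun n => Filter.Eventually.of_forall fun r => norm_indicator_le_norm_self _ _) ?_
    rw [ae_restrict_iff' measurableSet_Ioi]
    refine Filter.Eventually.of_forall fun r hr => ?_
    have h1 : ∀ᶠ n in atTop, es n < r := hes_to.eventually_lt_const hr
    have h2 : ∀ᶠ n in atTop, r ≤ Rs n := hRs_to.eventually_ge_atTop r
    refine Tendsto.congr' ?_ (tendsto_const_nhds (x := Q r))
    filter_upwards [h1, h2] with n hn1 hn2
    exact (Set.indicator_of_mem (show r ∈ Ioc (es n) (Rs n) from ⟨hn1, hn2⟩) Q).symm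
  -- nonnegativity of the full integral
  have h0Q : 0 ≤ ∫ r in Ioi (0:ℝ), Q r := by
    refine le_of_tendsto_of_tendsto' (f := fun n => F (Rs n) - F (es n))
      (by simpa using hFR.sub hF0) hint_to (fun n => ?_)
    exact hkey (es n) (Rs n) (hes_pos n) (hesRs n)
  -- split the integral
  have hsplit : ∫ r in Ioi (0:ℝ), Q r
      = (1 / 2) * (∫ r in Ioi (0:ℝ), (g' r) ^ 2)
        + (∫ r in Ioi (0:ℝ), ((l : ℝ) * a / (2 * r ^ 2) - 1 / r) * (g r) ^ 2)
        + 1 / (2 * a ^ 2) * ∫ r in Ioi (0:ℝ), (g r) ^ 2 := by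
    have i1 : IntegrableOn (fun r => (1 / 2) * (g' r) ^ 2) (Ioi (0:ℝ)) :=
      hg'_L2.const_mul (1/2)
    have i2 : IntegrableOn (fun r => (1 / 2) * (g' r) ^ 2
        + ((l : ℝ) * a / (2 * r ^ 2) - 1 / r) * (g r) ^ 2) (Ioi (0:ℝ)) := i1.add hpot
    have i3 : IntegrableOn (fun r => 1 / (2 * a ^ 2) * (g r) ^ 2) (Ioi (0:ℝ)) :=
      hg_L2.const_mul _
    simp only [hQ_def]
    rw [integral_add i2 i3, integral_add i1 hpot, integral_const_mul, integral_const_mul]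
  linarith [h0Q, hsplit]
end
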